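/- Let D be an h-local domain, A, B nonzero ideals of D, and M a maximal ideal of D. Then (A : B)·D_M = (A·D_M) : (B·D_M). -/

import Mathlib

/-- A domain has *finite character* if every nonzero element lies in only finitely
many maximal ideals. -/
def FiniteCharacter (R : Type*) [CommRing R] : Prop :=
  ∀ x : R, x ≠ 0 → {M : Ideal R | M.IsMaximal ∧ x ∈ M}.Finite

/-- A domain is *h-local* if it has finite character and every nonzero prime ideal
is contained in a unique maximal ideal. -/
def IsHLocal (R : Type*) [CommRing R] : Prop :=
  FiniteCharacter R ∧
    ∀ P : Ideal R, P.IsPrime → P ≠ ⊥ → ∃! M : Ideal R, M.IsMaximal ∧ P ≤ M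

section Helpers

variable {R : Type*} [CommRing R]

/-- If for every maximal ideal `N` there is `u ∉ N` with `u * y ∈ A`, then `y ∈ A`. -/
lemma mem_of_forall_maximal {A : Ideal R} {y : R}
    (hy : ∀ N : Ideal R, N.IsMaximal → ∃ u ∉ N, u * y ∈ A) : y ∈ A := by
  by_contra hyA
  have hne : A.colon (Ideal.span {y}) ≠ ⊤ := by
    intro ht
    have h1 : (1 : R) ∈ A.colon (Ideal.span {y}) := by rw [ht]; trivial
    exact hyA (by simpa using Ideal.mem_colon_span_singleton.mp h1)
  obtain ⟨N, hN, hle⟩ := Ideal.exists_le_maximal _ hne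
  obtain ⟨u, hu, huy⟩ := hy N hN
  exact hu (hle (Ideal.mem_colon_span_singleton.mpr huy))

/-- Crux lemma: in an h-local domain, for distinct maximal ideals `M ≠ N` and `a ≠ 0`,
there are `t ∉ M` and `u ∉ N` with `u * t ∈ (a)`. -/
lemma hlocal_crux [IsDomain R] (h : IsHLocal R) {M N : Ideal R}
    (hM : M.IsMaximal) (hN : N.IsMaximal) (hMN : M ≠ N) {a : R} (ha : a ≠ 0) :
    ∃ t ∉ M, ∃ u ∉ N, u * t ∈ Ideal.span {a} := by
  by_contra hcon
  push_neg at hcon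
  -- the multiplicative set of products s * t with s ∉ M, t ∉ N
  let U : Submonoid R :=
    { carrier := {x | ∃ s, s ∉ M ∧ ∃ t, t ∉ N ∧ x = t * s}
      one_mem' := ⟨1, (Ideal.ne_top_iff_one M).mp hM.ne_top, 1,
        (Ideal.ne_top_iff_one N).mp hN.ne_top, (one_mul 1).symm⟩
      mul_mem' := by
        rintro x y ⟨s₁, hs₁, t₁, ht₁, rfl⟩ ⟨s₂, hs₂, t₂, ht₂, rfl⟩
        refine ⟨s₁ * s₂, fun hmem => ?_, t₁ * t₂, fun hmem => ?_, by ring⟩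
        · exact (hM.isPrime.mem_or_mem hmem).elim hs₁ hs₂
        · exact (hN.isPrime.mem_or_mem hmem).elim ht₁ ht₂ }
  have hdisj : Disjoint (Ideal.span {a} : Set R) (U : Set R) := by
    rw [Set.disjoint_left]
    rintro x hx ⟨s, hs, t, ht, rfl⟩
    exact hcon s hs t ht hx
  obtain ⟨P, hP, hPa, hPU⟩ := Ideal.exists_le_prime_disjoint _ U hdisj
  have haP : a ∈ P := hPa (Ideal.mem_span_singleton_self a)
  have hPbot : P ≠ ⊥ := fun hb => ha (by simpa [hb] using haP)
  have hPM : P ≤ M := by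
    intro x hxP
    by_contra hxM
    exact Set.disjoint_left.mp hPU hxP
      ⟨x, hxM, 1, (Ideal.ne_top_iff_one N).mp hN.ne_top, (one_mul x).symm⟩
  have hPN : P ≤ N := by
    intro x hxP
    by_contra hxN
    exact Set.disjoint_left.mp hPU hxP
      ⟨1, (Ideal.ne_top_iff_one M).mp hM.ne_top, x, hxN, (mul_one x).symm⟩
  obtain ⟨W, _, hWuniq⟩ := h.2 P hP hPbot
  exact hMN ((hWuniq M ⟨hM, hPM⟩).trans (hWuniq N ⟨hN, hPN⟩).symm)

/-- Combine elements avoiding a prime over a finite set of conditions by taking products. -/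
lemma exists_notMem_prime_prod {M : Ideal R} (hM : M.IsPrime)
    (F : Finset (Ideal R)) (Q : Ideal R → R → Prop)
    (habs : ∀ N t t', Q N t → Q N (t * t'))
    (hex : ∀ N ∈ F, ∃ t ∉ M, Q N t) : ∃ t ∉ M, ∀ N ∈ F, Q N t := by
  classical
  induction F using Finset.induction_on with
  | empty => exact ⟨1, (Ideal.ne_top_iff_one M).mp hM.ne_top, by simp⟩
  | @insert j F hj ih =>
    obtain ⟨t, htM, htF⟩ := ih fun N hN => hex N (Finset.mem_insert_of_mem hN)
    obtain ⟨tj, htjM, hQj⟩ := hex j (Finset.mem_insert_self j F)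
    refine ⟨tj * t, fun hmem => (hM.mem_or_mem hmem).elim htjM htM, ?_⟩
    intro N hN
    rcases Finset.mem_insert.mp hN with rfl | hNF
    · exact habs _ _ _ hQj
    · exact mul_comm tj t ▸ habs _ _ _ (htF N hNF)

end Helpers

theorem hlocal_colon_localization (R : Type*) [CommRing R] [IsDomain R]
    (h : IsHLocal R) (A B : Ideal R) (hA : A ≠ ⊥) (hB : B ≠ ⊥)
    (M : Ideal R) (hM : M.IsMaximal) :
    (A.colon B).map (algebraMap R (Localization.AtPrime M)) =
      (A.map (algebraMap R (Localization.AtPrime M))).colon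
        (B.map (algebraMap R (Localization.AtPrime M))) := by
  haveI := hM.isPrime
  set L := Localization.AtPrime M
  apply le_antisymm
  · -- easy inclusion
    rw [Ideal.map_le_iff_le_comap]
    intro y hy
    rw [Ideal.mem_comap, Submodule.mem_colon]
    intro z hz
    obtain ⟨⟨b, u⟩, hu⟩ := (IsLocalization.mem_map_algebraMap_iff M.primeCompl L).mp hz
    rw [smul_eq_mul]
    refine (IsLocalization.mem_map_algebraMap_iff M.primeCompl L).mpr
      ⟨⟨⟨y * (b : R), ?_⟩, u⟩, ?_⟩
    · exact Submodule.mem_colon.mp hy (b : R) b.2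
    · simp only [map_mul]
      rw [mul_assoc, hu]
  · -- hard inclusion
    intro x hx
    obtain ⟨⟨r, s⟩, rfl⟩ := IsLocalization.mk'_surjective M.primeCompl x
    obtain ⟨a, haA, ha0⟩ := (Submodule.ne_bot_iff A).mp hA
    have hfin := h.1 a ha0
    classical
    -- find t0 ∉ M handling all other maximal ideals containing a
    obtain ⟨t0, ht0M, ht0⟩ :=
      exists_notMem_prime_prod hM.isPrime hfin.toFinset
        (fun N t => N ≠ M → ∃ u ∉ N, u * t ∈ Ideal.span {a})
        (by
          rintro N t t' hq hNM
          obtain ⟨u, hu, hut⟩ := hq hNM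
          exact ⟨u, hu, by rw [← mul_assoc]; exact Ideal.mul_mem_right t' _ hut⟩)
        (by
          intro N hN
          rw [Set.Finite.mem_toFinset] at hN
          by_cases hNM : N = M
          · exact ⟨1, (Ideal.ne_top_iff_one M).mp hM.isPrime.ne_top,
              fun hc => absurd hNM hc⟩
          · obtain ⟨t, htM, hu⟩ := hlocal_crux h hM hN.1 (Ne.symm hNM) ha0
            exact ⟨t, htM, fun _ => hu⟩)
    -- key claim: t0 * r ∈ A.colon B
    have key : t0 * r ∈ A.colon B := by
      rw [Submodule.mem_colon]
      intro b hb
      rw [smul_eq_mul]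
      apply mem_of_forall_maximal
      intro N hN
      by_cases hNM : N = M
      · -- use the hypothesis hx at M
        subst hNM
        have hxb : IsLocalization.mk' L r s * algebraMap R L b ∈
            A.map (algebraMap R L) :=
          smul_eq_mul (IsLocalization.mk' L r s) (algebraMap R L b) ▸ Submodule.mem_colon.mp hx _ (Ideal.mem_map_of_mem _ hb)
        have heq : IsLocalization.mk' L r s * algebraMap R L b =
            IsLocalization.mk' L (r * b) s := by
          rw [← IsLocalization.mk'_one (M := N.primeCompl) L b, ← IsLocalization.mk'_mul,
            mul_one]
        rw [heq, IsLocalization.mk'_mem_map_algebraMap_iff] at hxb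
        obtain ⟨u, huM, hu⟩ := hxb
        refine ⟨u, huM, ?_⟩
        have heq2 : u * (t0 * r * b) = t0 * (u * (r * b)) := by ring
        rw [heq2]
        exact A.mul_mem_left t0 hu
      · by_cases haN : a ∈ N
        · obtain ⟨u, huN, hu⟩ := ht0 N (hfin.mem_toFinset.mpr ⟨hN, haN⟩) hNM
          refine ⟨u, huN, ?_⟩
          have hut : u * t0 ∈ A := (Ideal.span_singleton_le_iff_mem A).mpr haA hu
          have heq2 : u * (t0 * r * b) = (u * t0) * (r * b) := by ring
          rw [heq2]
          exact A.mul_mem_right _ hut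
        · refine ⟨a, haN, ?_⟩
          have heq2 : a * (t0 * r * b) = (t0 * r * b) * a := by ring
          rw [heq2]
          exact A.mul_mem_left _ haA
    rw [IsLocalization.mk'_mem_map_algebraMap_iff]
    exact ⟨t0, ht0M, key⟩
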